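/- Let Λ be a simply laced root lattice whose set of roots Φ forms an irreducible root system, let Δ = {α_1, ..., α_ℓ} be a base of simple roots of Φ, and let c = s_{α_1} ··· s_{α_ℓ} be a Coxeter element, i.e. the product (in some order, each appearing once) of the simple reflections s_{α_i}(x) = x − (x, α_i)α_i acting on Λ ⊗ ℝ. Let Λ⁰ := {γ ∈ Λ ⊗ ℝ | (γ, α) ∈ ℤ for all α ∈ Λ} be the weight lattice. Then Λ = (1 − c)Λ⁰; in particular Λ ⊆ (1 − c)Λ⁰, so the pairing ⟨·,·⟩_c on Λ_c = Λ/(1−c)Λ is trivial. -/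

import Mathlib

noncomputable section

/-- **Lemma 5.3.** Let `Λ` be a simply laced root lattice whose roots `Φ` form an
irreducible root system (realized inside the real vector space `V = Λ ⊗ ℝ` with bilinear
form `Bf`), let `c` be a Coxeter element of the Weyl group (a product of the simple
reflections, each occurring once, in some order), let `d` be the order of `c`, and let
`Λ⁰ = {γ ∈ V | (γ, Λ) ⊆ ℤ}` be the weight lattice.  Then `Λ = (1 − c)Λ⁰`; in particular
`Λ ⊆ (1 − c)Λ⁰`, so the pairing `⟨·,·⟩_c` on `Λ_c` is trivial
(`∑_{j=1}^{d−1} j(c^jα, β) ≡ 0 mod d` on `Λ`). -/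
private lemma tele_aux (g : ℕ → ℝ) :
    ∀ D : ℕ, ∑ j ∈ Finset.Ico 1 (D + 1), (j : ℝ) * (g j - g (j + 1)) =
      ∑ j ∈ Finset.Ico 1 (D + 1), g j - (D : ℝ) * g (D + 1) := by
  intro D
  induction D with
  | zero => simp
  | succ D ih =>
    rw [Finset.sum_Ico_succ_top (by omega), Finset.sum_Ico_succ_top (by omega) g, ih]
    push_cast
    ring

theorem coxeter_element_coinvariant_pairing_trivial
    (V : Type*) [AddCommGroup V] [Module ℝ V] [FiniteDimensional ℝ V]
    (Bf : V →ₗ[ℝ] V →ₗ[ℝ] ℝ)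
    (hsymm : ∀ x y : V, Bf x y = Bf y x)
    (hpos : ∀ x : V, x ≠ 0 → 0 < Bf x x)
    -- Φ is a (reduced, crystallographic) simply laced root system spanning V
    (Φ : Set V) (hΦfin : Φ.Finite) (hΦne : Φ.Nonempty)
    (hroot2 : ∀ a ∈ Φ, Bf a a = 2)
    (hint : ∀ a ∈ Φ, ∀ b ∈ Φ, ∃ n : ℤ, Bf a b = n)
    (hspan : Submodule.span ℝ Φ = ⊤)
    (hneg : ∀ a ∈ Φ, -a ∈ Φ)
    (hrefl : ∀ a ∈ Φ, ∀ b ∈ Φ, b - Bf a b • a ∈ Φ)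
    -- irreducibility
    (hirr : ∀ S T : Set V, S ∪ T = Φ → (∀ a ∈ S, ∀ b ∈ T, Bf a b = 0) →
      S = ∅ ∨ T = ∅)
    -- a base of simple roots α_1, ..., α_ℓ
    (ℓ : ℕ) (α : Fin ℓ → V) (hα : ∀ i, α i ∈ Φ)
    (hind : LinearIndependent ℝ α)
    (hbase : ∀ φ ∈ Φ, (∃ f : Fin ℓ → ℕ, φ = ∑ i, (f i : ℝ) • α i) ∨
      (∃ f : Fin ℓ → ℕ, φ = -∑ i, (f i : ℝ) • α i))
    -- a Coxeter element: the product of the simple reflections in some order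
    (σ : Equiv.Perm (Fin ℓ))
    (c : V →ₗ[ℝ] V)
    (hc : c = (List.ofFn (fun i : Fin ℓ =>
      (LinearMap.id : V →ₗ[ℝ] V) - (Bf (α (σ i))).smulRight (α (σ i)))).prod)
    -- d is the order of c
    (d : ℕ) (hd : 0 < d) (hcord : orderOf c = d) :
    -- Λ = (1 − c)Λ⁰
    ((AddSubgroup.closure Φ : Set V) =
      (fun γ : V => γ - c γ) ''
        {γ : V | ∀ a ∈ AddSubgroup.closure Φ, ∃ n : ℤ, Bf γ a = n}) ∧
    -- hence the pairing ⟨·,·⟩_c on Λ_c is trivial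
    (∀ a ∈ AddSubgroup.closure Φ, ∀ b ∈ AddSubgroup.closure Φ,
      ∃ n : ℤ, ∑ j ∈ Finset.Ico 1 d, (j : ℝ) * Bf ((c ^ j) a) b = ((d : ℤ) * n : ℤ)) := by
  classical
  set β : Fin ℓ → V := fun i => α (σ i) with hβdef
  set s : Fin ℓ → (V →ₗ[ℝ] V) := fun i =>
    (LinearMap.id : V →ₗ[ℝ] V) - (Bf (β i)).smulRight (β i) with hsdef
  have hc' : c = (List.ofFn s).prod := hc
  set q : ℕ → (V →ₗ[ℝ] V) := fun k => ((List.ofFn s).take k).prod with hqdef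
  have hsval : ∀ i x, s i x = x - Bf (β i) x • β i := by
    intro i x; simp [hsdef]
  have hq0 : q 0 = 1 := by simp [hqdef]
  have hqsucc : ∀ k (h : k < ℓ), q (k + 1) = q k * s ⟨k, h⟩ := by
    intro k h
    have hlen : k < (List.ofFn s).length := by simpa using h
    rw [hqdef]
    simp only []
    rw [List.prod_take_succ _ _ hlen]
    congr 1
    simp [List.getElem_ofFn]
  have hqtop : ∀ k, ℓ ≤ k → q k = c := by
    intro k hk
    rw [hc', hqdef]
    simp only []
    rw [List.take_of_length_le (by simpa using hk)]
  have hql : q ℓ = c := hqtop ℓ le_rfl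
  -- telescoping identity
  have htel : ∀ γ : V, γ - c γ =
      ∑ k : Fin ℓ, Bf (β k) γ • q k.val (β k) := by
    intro γ
    have key : ∀ k, k ≤ ℓ → γ - q k γ =
        ∑ m ∈ Finset.range k,
          (if h : m < ℓ then Bf (β ⟨m, h⟩) γ • q m (β ⟨m, h⟩) else 0) := by
      intro k
      induction k with
      | zero => intro _; simp [hq0]
      | succ k ih =>
        intro hk
        have hkℓ : k < ℓ := hk
        rw [Finset.sum_range_succ, ← ih (le_of_lt hkℓ), hqsucc k hkℓ,
          Module.End.mul_apply, dif_pos hkℓ]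
        have : q k γ - q k (s ⟨k, hkℓ⟩ γ) = Bf (β ⟨k, hkℓ⟩) γ • q k (β ⟨k, hkℓ⟩) := by
          rw [← map_sub, hsval]
          simp [map_smul]
        rw [← this]; abel
    have := key ℓ le_rfl
    rw [hql] at this
    rw [this, ← Fin.sum_univ_eq_sum_range
      (fun m => if h : m < ℓ then Bf (β ⟨m, h⟩) γ • q m (β ⟨m, h⟩) else 0) ℓ]
    exact Finset.sum_congr rfl (fun k _ => by rw [dif_pos k.isLt])
  -- the root lattice as a ℤ-submodule
  set L : Submodule ℤ V := Submodule.span ℤ (Set.range α) with hLdef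
  have hβL : ∀ k, β k ∈ L := fun k => Submodule.subset_span ⟨σ k, rfl⟩
  have hαL : ∀ i, α i ∈ L := fun i => Submodule.subset_span ⟨i, rfl⟩
  have hΦL : Φ ⊆ (L : Set V) := by
    intro φ hφ
    rcases hbase φ hφ with ⟨f, hf⟩ | ⟨f, hf⟩
    · rw [hf]
      exact Submodule.sum_mem _ (fun i _ => by
        rw [Nat.cast_smul_eq_nsmul]; exact nsmul_mem (hαL i) _)
    · rw [hf]
      exact Submodule.neg_mem _ (Submodule.sum_mem _ (fun i _ => by
        rw [Nat.cast_smul_eq_nsmul]; exact nsmul_mem (hαL i) _))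
  have hclosure : (AddSubgroup.closure Φ : Set V) = (L : Set V) := by
    apply Set.Subset.antisymm
    · exact AddSubgroup.closure_le (L.toAddSubgroup) |>.mpr hΦL
    · intro x hx
      refine Submodule.span_induction (p := fun x _ => x ∈ AddSubgroup.closure Φ)
        ?_ ?_ ?_ ?_ hx
      · rintro y ⟨i, rfl⟩; exact AddSubgroup.subset_closure (hα i)
      · exact AddSubgroup.zero_mem _
      · intro a b _ _ ha hb; exact AddSubgroup.add_mem _ ha hb
      · intro n a _ ha; exact AddSubgroup.zsmul_mem _ ha n
  -- pairing of lattice elements with roots is integral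
  have hLint : ∀ j : Fin ℓ, ∀ x ∈ L, ∃ n : ℤ, Bf (β j) x = n := by
    intro j x hx
    refine Submodule.span_induction (p := fun x _ => ∃ n : ℤ, Bf (β j) x = n)
      ?_ ?_ ?_ ?_ hx
    · rintro y ⟨i, rfl⟩; exact hint _ (hα (σ j)) _ (hα i)
    · exact ⟨0, by simp⟩
    · rintro a b _ _ ⟨m, hm⟩ ⟨n, hn⟩; exact ⟨m + n, by rw [map_add, hm, hn]; push_cast; ring⟩
    · rintro n a _ ⟨m, hm⟩
      refine ⟨n * m, ?_⟩
      rw [← Int.cast_smul_eq_zsmul ℝ, map_smul, hm, smul_eq_mul]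
      push_cast; ring
  have hsL : ∀ j, ∀ x ∈ L, s j x ∈ L := by
    intro j x hx
    rw [hsval]
    obtain ⟨n, hn⟩ := hLint j x hx
    rw [hn, Int.cast_smul_eq_zsmul]
    exact Submodule.sub_mem _ hx (zsmul_mem (hβL j) n)
  have hqL : ∀ k, ∀ x ∈ L, q k x ∈ L := by
    intro k
    induction k with
    | zero => intro x hx; rw [hq0]; simpa using hx
    | succ k ih =>
      intro x hx
      rcases lt_or_ge k ℓ with h | h
      · rw [hqsucc k h, Module.End.mul_apply]
        exact ih _ (hsL _ _ hx)
      · rw [hqtop (k + 1) (by omega), ← hqtop k h]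
        exact ih x hx
  have hqβL : ∀ k : Fin ℓ, q k.val (β k) ∈ L := fun k => hqL _ _ (hβL k)
  -- correction term lemma
  have hcorr : ∀ k, k ≤ ℓ → ∀ x ∈ L, q k x - x ∈
      Submodule.span ℤ (β '' {j : Fin ℓ | (j : ℕ) < k}) := by
    intro k
    induction k with
    | zero => intro _ x hx; rw [hq0]; simp
    | succ k ih =>
      intro hk x hx
      have hkℓ : k < ℓ := hk
      rw [hqsucc k hkℓ, Module.End.mul_apply]
      have h1 : q k (s ⟨k, hkℓ⟩ x) - s ⟨k, hkℓ⟩ x ∈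
          Submodule.span ℤ (β '' {j : Fin ℓ | (j : ℕ) < k}) :=
        ih (le_of_lt hkℓ) _ (hsL _ _ hx)
      have hmono : Submodule.span ℤ (β '' {j : Fin ℓ | (j : ℕ) < k}) ≤
          Submodule.span ℤ (β '' {j : Fin ℓ | (j : ℕ) < k + 1}) :=
        Submodule.span_mono (Set.image_mono (fun j hj => by
          simp only [Set.mem_setOf_eq] at *; omega))
      have h2 : s ⟨k, hkℓ⟩ x - x ∈
          Submodule.span ℤ (β '' {j : Fin ℓ | (j : ℕ) < k + 1}) := by
        obtain ⟨n, hn⟩ := hLint ⟨k, hkℓ⟩ x hx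
        have hx2 : s ⟨k, hkℓ⟩ x - x = -(n • β ⟨k, hkℓ⟩) := by
          rw [hsval, hn, Int.cast_smul_eq_zsmul]; abel
        rw [hx2]
        refine Submodule.neg_mem _ (zsmul_mem (Submodule.subset_span ?_) n)
        exact ⟨⟨k, hkℓ⟩, by simp, rfl⟩
      have := Submodule.add_mem _ (hmono h1) h2
      have heq : q k (s ⟨k, hkℓ⟩ x) - s ⟨k, hkℓ⟩ x + (s ⟨k, hkℓ⟩ x - x) =
          q k (s ⟨k, hkℓ⟩ x) - x := by abel
      rwa [heq] at this
  -- basis from the simple roots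
  have hspanα : Submodule.span ℝ (Set.range α) = ⊤ := by
    rw [eq_top_iff, ← hspan]
    refine Submodule.span_le.mpr ?_
    intro φ hφ
    rcases hbase φ hφ with ⟨f, hf⟩ | ⟨f, hf⟩
    · rw [hf]
      exact Submodule.sum_mem _ (fun i _ =>
        Submodule.smul_mem _ _ (Submodule.subset_span ⟨i, rfl⟩))
    · rw [hf]
      exact Submodule.neg_mem _ (Submodule.sum_mem _ (fun i _ =>
        Submodule.smul_mem _ _ (Submodule.subset_span ⟨i, rfl⟩)))
  set b : Module.Basis (Fin ℓ) ℝ V := Module.Basis.mk hind (hspanα.ge) with hbdef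
  have hbα : ∀ i, b i = α i := fun i => Module.Basis.mk_apply hind _ i
  have hnd : LinearMap.BilinForm.Nondegenerate Bf := by
    refine ⟨fun x hx => ?_, fun x hx => ?_⟩ <;>
    · by_contra h
      exact absurd (hx x) (ne_of_gt (hpos x h))
  set ω : Fin ℓ → V := fun k => (LinearMap.BilinForm.toDual Bf hnd).symm (b.coord (σ k))
    with hωdef
  have hωval : ∀ k x, Bf (ω k) x = b.coord (σ k) x := by
    intro k x
    have := LinearMap.BilinForm.toDual_def hnd (m := ω k) (n := x)
    rw [← this, hωdef]
    simp
  have hωα : ∀ k i, Bf (ω k) (α i) = if σ k = i then 1 else 0 := by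
    intro k i
    rw [hωval, ← hbα, Module.Basis.coord_apply, b.repr_self, Finsupp.single_apply]
    simp [eq_comm]
  have hωβ : ∀ k j, Bf (ω k) (β j) = if k = j then 1 else 0 := by
    intro k j
    rw [hβdef]
    simp only []
    rw [hωα]
    simp [Equiv.apply_eq_iff_eq]
  have hωW : ∀ k, ω k ∈ {γ : V | ∀ a ∈ AddSubgroup.closure Φ, ∃ n : ℤ, Bf γ a = n} := by
    intro k a ha
    have haL : a ∈ L := by rw [← SetLike.mem_coe, ← hclosure]; exact ha
    refine Submodule.span_induction (p := fun a _ => ∃ n : ℤ, Bf (ω k) a = n)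
      ?_ ?_ ?_ ?_ haL
    · rintro y ⟨i, rfl⟩
      rw [hωα]
      by_cases h : σ k = i
      · exact ⟨1, by simp [h]⟩
      · exact ⟨0, by simp [h]⟩
    · exact ⟨0, by simp⟩
    · rintro u w _ _ ⟨m, hm⟩ ⟨n, hn⟩
      exact ⟨m + n, by rw [map_add, hm, hn]; push_cast; ring⟩
    · rintro n u _ ⟨m, hm⟩
      refine ⟨n * m, ?_⟩
      rw [← Int.cast_smul_eq_zsmul ℝ, map_smul, hm, smul_eq_mul]
      push_cast; ring
  have hωim : ∀ k : Fin ℓ, ω k - c (ω k) = q k.val (β k) := by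
    intro k
    rw [htel (ω k)]
    rw [Finset.sum_eq_single k]
    · rw [hsymm, hωβ, if_pos rfl, one_smul]
    · intro j _ hj
      rw [hsymm, hωβ, if_neg (Ne.symm hj), zero_smul]
    · intro h; exact absurd (Finset.mem_univ k) h
  set W₀ : Submodule ℤ V :=
    { carrier := {γ : V | ∀ a ∈ AddSubgroup.closure Φ, ∃ n : ℤ, Bf γ a = n}
      add_mem' := by
        rintro u w hu hw a ha
        obtain ⟨m, hm⟩ := hu a ha
        obtain ⟨n, hn⟩ := hw a ha
        exact ⟨m + n, by rw [map_add, LinearMap.add_apply, hm, hn]; push_cast; ring⟩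
      zero_mem' := by intro a ha; exact ⟨0, by simp⟩
      smul_mem' := by
        rintro n u hu a ha
        obtain ⟨m, hm⟩ := hu a ha
        refine ⟨n * m, ?_⟩
        rw [← Int.cast_smul_eq_zsmul ℝ, map_smul, LinearMap.smul_apply, hm, smul_eq_mul]
        push_cast; ring } with hW₀def
  set f1c : V →ₗ[ℤ] V :=
    ((LinearMap.id : V →ₗ[ℝ] V) - c).restrictScalars ℤ with hf1cdef
  have hf1c : ∀ x, f1c x = x - c x := by intro x; simp [hf1cdef]
  set T : Submodule ℤ V := Submodule.map f1c W₀ with hTdef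
  have hTL : T ≤ L := by
    rintro x ⟨γ, hγ, rfl⟩
    rw [hf1c, htel]
    refine Submodule.sum_mem _ (fun k _ => ?_)
    obtain ⟨n, hn⟩ := hγ (β k) (by
      rw [← SetLike.mem_coe, hclosure]; exact hβL k)
    rw [hsymm, hn, Int.cast_smul_eq_zsmul]
    exact zsmul_mem (hqβL k) n
  have hqβT : ∀ k : Fin ℓ, q k.val (β k) ∈ T :=
    fun k => ⟨ω k, hωW k, by rw [hf1c, hωim]⟩
  have hβT : ∀ k : Fin ℓ, β k ∈ T := by
    have key : ∀ n : ℕ, ∀ k : Fin ℓ, (k : ℕ) < n → β k ∈ T := by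
      intro n
      induction n with
      | zero => intro k hk; omega
      | succ n ih =>
        intro k hk
        rcases lt_or_ge (k : ℕ) n with h | h
        · exact ih k h
        · have hcor := hcorr k.val (le_of_lt k.isLt) (β k) (hβL k)
          have hsub : Submodule.span ℤ (β '' {j : Fin ℓ | (j : ℕ) < (k : ℕ)}) ≤ T := by
            refine Submodule.span_le.mpr ?_
            rintro y ⟨j, hj, rfl⟩
            refine ih j ?_
            simp only [Set.mem_setOf_eq] at hj
            omega
          have hk2 : β k = q k.val (β k) - (q k.val (β k) - β k) := by abel
          rw [hk2]
          exact Submodule.sub_mem _ (hqβT k) (hsub hcor)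
    exact fun k => key ℓ k k.isLt
  have hLT : L ≤ T := by
    refine Submodule.span_le.mpr ?_
    rintro y ⟨i, rfl⟩
    have hαβ : α i = β (σ.symm i) := by rw [hβdef]; simp
    rw [hαβ]
    exact hβT _
  have hpart1 : (AddSubgroup.closure Φ : Set V) =
      (fun γ : V => γ - c γ) ''
        {γ : V | ∀ a ∈ AddSubgroup.closure Φ, ∃ n : ℤ, Bf γ a = n} := by
    have hLTeq : L = T := le_antisymm hLT hTL
    have himT : (fun γ : V => γ - c γ) ''
        {γ : V | ∀ a ∈ AddSubgroup.closure Φ, ∃ n : ℤ, Bf γ a = n} = (T : Set V) := by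
      ext x
      constructor
      · rintro ⟨γ, hγ, rfl⟩
        exact ⟨γ, hγ, hf1c γ⟩
      · rintro ⟨γ, hγ, rfl⟩
        exact ⟨γ, hγ, (hf1c γ).symm⟩
    rw [himT, hclosure, hLTeq]
  refine ⟨hpart1, ?_⟩
  have hinj : Function.Injective ((LinearMap.id : V →ₗ[ℝ] V) - c) := by
    rw [LinearMap.injective_iff_surjective, ← LinearMap.range_eq_top, eq_top_iff, ← hspanα]
    refine Submodule.span_le.mpr ?_
    rintro y ⟨i, rfl⟩
    obtain ⟨γ, -, hgq⟩ := hLT (hαL i)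
    exact ⟨γ, by rw [← hgq, hf1c]; simp⟩
  intro a ha b hb
  have haT : a ∈ T := by
    rw [← le_antisymm hLT hTL, ← SetLike.mem_coe, ← hclosure]
    exact ha
  obtain ⟨γ, hγ, hfγ⟩ := haT
  obtain ⟨m, hm⟩ := hγ b hb
  set g : ℕ → ℝ := fun j => Bf ((c ^ j) γ) b with hgdef
  have hterm : ∀ j, Bf ((c ^ j) a) b = g j - g (j + 1) := by
    intro j
    have h1 : (c ^ j) a = (c ^ j) γ - (c ^ (j + 1)) γ := by
      rw [← hfγ, hf1c, map_sub, pow_succ, Module.End.mul_apply]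
    rw [h1, map_sub, LinearMap.sub_apply, hgdef]
  have hsum : ∑ j ∈ Finset.Ico 1 d, (j : ℝ) * Bf ((c ^ j) a) b =
      ∑ j ∈ Finset.Ico 1 d, (j : ℝ) * (g j - g (j + 1)) :=
    Finset.sum_congr rfl (fun j _ => by rw [hterm])
  have hd1 : d - 1 + 1 = d := Nat.succ_pred_eq_of_pos hd
  have htl := tele_aux g (d - 1)
  rw [hd1] at htl
  have hcd : c ^ d = 1 := by rw [← hcord]; exact pow_orderOf_eq_one c
  have hgd : g d = g 0 := by rw [hgdef]; simp [hcd]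
  set v : V := ∑ j ∈ Finset.range d, (c ^ j) γ with hvdef
  have hcv : c v = v := by
    have h2 : ∀ j, c ((c ^ j) γ) = (c ^ (j + 1)) γ := by
      intro j; rw [pow_succ', Module.End.mul_apply]
    have h3 : (∑ j ∈ Finset.range d, (c ^ (j + 1)) γ) + (c ^ 0) γ =
        (∑ j ∈ Finset.range d, (c ^ j) γ) + (c ^ d) γ := by
      rw [← Finset.sum_range_succ' (fun j => (c ^ j) γ) d,
        Finset.sum_range_succ (fun j => (c ^ j) γ) d]
    have h4 : (c ^ d) γ = γ := by rw [hcd]; simp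
    have h0 : (c ^ 0) γ = γ := by simp
    rw [h4, h0] at h3
    rw [hvdef, map_sum, Finset.sum_congr rfl (fun j _ => h2 j)]
    exact add_right_cancel h3
  have hv0 : v = 0 := by
    apply hinj
    rw [map_zero, LinearMap.sub_apply, LinearMap.id_apply, hcv, sub_self]
  have hsumg : ∑ j ∈ Finset.range d, g j = 0 := by
    have h6 : Bf v b = ∑ j ∈ Finset.range d, g j := by
      rw [hvdef, map_sum, LinearMap.sum_apply]
    rw [← h6, hv0]
    simp
  have hIco : ∑ j ∈ Finset.Ico 1 d, g j = ∑ j ∈ Finset.range d, g j - g 0 := by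
    rw [Finset.range_eq_Ico, Finset.sum_eq_sum_Ico_succ_bot hd g]
    ring
  have hg0 : g 0 = m := by rw [hgdef]; simpa using hm
  refine ⟨-m, ?_⟩
  rw [hsum, htl, hIco, hsumg, hgd, hg0, Nat.cast_sub hd]
  push_cast
  ring

end
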